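/- Let F=(f₁,…,fₙ):ℝⁿ→ℝⁿ be a polynomial map satisfying F(0)=0 and det DF(x)≠0 for all x∈ℝⁿ, and let H(x)=‖F(x)‖₂²/2. If ‖F(x)‖₂ → +∞ as ‖x‖₂ → +∞, then the origin is the unique point of ℝⁿ at which the gradient ∇H=(∂H/∂x₁,…,∂H/∂xₙ) vanishes; i.e., the origin is the unique singular point of the gradient vector field Y=(−∂H/∂x₁,…,−∂H/∂xₙ). -/

import Mathlib

open MvPolynomial Filter

noncomputable def euclidNorm {n : ℕ} (x : Fin n → ℝ) : ℝ :=
  Real.sqrt (∑ i, x i ^ 2)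

noncomputable def evalMap {n : ℕ} (F : Fin n → MvPolynomial (Fin n) ℝ) (x : Fin n → ℝ) :
    Fin n → ℝ := fun i => eval x (F i)

noncomputable def jacDet {n : ℕ} (F : Fin n → MvPolynomial (Fin n) ℝ) (x : Fin n → ℝ) : ℝ :=
  Matrix.det (Matrix.of fun i j => eval x (pderiv j (F i)))

/-- The polynomial `H = ‖F‖₂²/2 = (f₁² + ⋯ + fₙ²)/2`. -/
noncomputable def polyH {n : ℕ} (F : Fin n → MvPolynomial (Fin n) ℝ) :
    MvPolynomial (Fin n) ℝ :=
  C (1 / 2 : ℝ) * ∑ i, F i ^ 2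

namespace Stmt8Aux

open Topology Metric Set

variable {n : ℕ}

noncomputable def Dclm (p : MvPolynomial (Fin n) ℝ) (x : Fin n → ℝ) : (Fin n → ℝ) →L[ℝ] ℝ :=
  ∑ i, eval x (pderiv i p) • ContinuousLinearMap.proj i

lemma Dclm_apply (p : MvPolynomial (Fin n) ℝ) (x v : Fin n → ℝ) :
    Dclm p x v = ∑ i, eval x (pderiv i p) * v i := by
  simp [Dclm]

lemma hasFDerivAt_eval (p : MvPolynomial (Fin n) ℝ) (x : Fin n → ℝ) :
    HasFDerivAt (fun y => eval y p) (Dclm p x) x := by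
  induction p using MvPolynomial.induction_on with
  | C a =>
      have : Dclm (C a : MvPolynomial (Fin n) ℝ) x = 0 := by
        ext v; simp [Dclm_apply, pderiv_C]
      rw [this]
      simpa using hasFDerivAt_const (a : ℝ) x
  | add p q hp hq =>
      have : Dclm (p + q) x = Dclm p x + Dclm q x := by
        ext v; simp [Dclm_apply, Finset.sum_add_distrib, add_mul]
      rw [this]
      simp only [map_add]
      exact hp.fun_add hq
  | mul_X p i hp =>
      have h2 : HasFDerivAt (fun y : Fin n → ℝ => y i)
          (ContinuousLinearMap.proj i : (Fin n → ℝ) →L[ℝ] ℝ) x :=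
        (ContinuousLinearMap.proj (R := ℝ) (φ := fun _ : Fin n => ℝ) i).hasFDerivAt
      have h := hp.mul' h2
      have hfun : (fun y : Fin n → ℝ => eval y (p * X i)) = fun y => eval y p * y i := by
        funext y; simp
      have heq : Dclm (p * X i) x
          = eval x p • (ContinuousLinearMap.proj i : (Fin n → ℝ) →L[ℝ] ℝ)
            + (Dclm p x).smulRight (x i) := by
        ext v
        classical
        simp only [Dclm_apply, ContinuousLinearMap.add_apply, ContinuousLinearMap.coe_smul',
          Pi.smul_apply, ContinuousLinearMap.proj_apply, smul_eq_mul,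
          ContinuousLinearMap.smulRight_apply, pderiv_mul, pderiv_X, map_add, map_mul, eval_X]
        simp only [add_mul, Finset.sum_add_distrib]
        have h1 : ∑ j, eval x p * eval x ((Pi.single j 1 : Fin n → MvPolynomial (Fin n) ℝ) i) * v j
            = eval x p * v i := by
          rw [Finset.sum_eq_single i]
          · simp
          · intro b _ hb
            have : (Pi.single b 1 : Fin n → MvPolynomial (Fin n) ℝ) i = 0 :=
              Pi.single_eq_of_ne (Ne.symm hb) 1
            simp [this]
          · simp
        have h2' : ∑ j, eval x (pderiv j p) * x i * v j
            = x i * ∑ j, eval x (pderiv j p) * v j := by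
          rw [Finset.mul_sum]; exact Finset.sum_congr rfl fun j _ => by ring
        rw [h1, h2']
        ring
      rw [hfun, heq]
      exact h

lemma hasDerivAt_eval_line (p : MvPolynomial (Fin n) ℝ) (x v : Fin n → ℝ) (t : ℝ) :
    HasDerivAt (fun s => eval (x + s • v) p)
      (∑ i, eval (x + t • v) (pderiv i p) * v i) t := by
  have hl : HasDerivAt (fun s : ℝ => x + s • v) v t := by
    simpa using ((hasDerivAt_id t).smul_const v).const_add x
  have := (hasFDerivAt_eval p (x + t • v)).comp_hasDerivAt t hl
  simp only [Dclm_apply] at this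
  exact this

lemma eval_pderiv_polyH (F : Fin n → MvPolynomial (Fin n) ℝ) (x : Fin n → ℝ) (i : Fin n) :
    eval x (pderiv i (polyH F)) = ∑ j, eval x (F j) * eval x (pderiv i (F j)) := by
  have h : pderiv i (polyH F)
      = C (1/2 : ℝ) * ∑ j, (pderiv i (F j) * F j + F j * pderiv i (F j)) := by
    unfold polyH
    rw [pderiv_mul, pderiv_C, map_sum]
    simp only [zero_mul, zero_add]
    congr 1
    exact Finset.sum_congr rfl fun j _ => by rw [pow_two, pderiv_mul]
  rw [h, eval_mul, eval_C, map_sum, Finset.mul_sum]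
  rw [← Finset.sum_congr rfl (fun j (_ : j ∈ Finset.univ) => ?_)]
  rw [eval_add, eval_mul, eval_mul]
  ring

lemma eval_polyH_eq (F : Fin n → MvPolynomial (Fin n) ℝ) (x : Fin n → ℝ) :
    eval x (polyH F) = (1/2) * ∑ j, (eval x (F j))^2 := by
  unfold polyH
  rw [eval_mul, eval_C, map_sum]
  simp [pow_two]

lemma polyH_nonneg (F : Fin n → MvPolynomial (Fin n) ℝ) (x : Fin n → ℝ) :
    0 ≤ eval x (polyH F) := by
  rw [eval_polyH_eq]
  positivity

lemma polyH_eq_zero_iff (F : Fin n → MvPolynomial (Fin n) ℝ) (x : Fin n → ℝ) :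
    eval x (polyH F) = 0 ↔ evalMap F x = 0 := by
  rw [eval_polyH_eq]
  constructor
  · intro h
    funext j
    have hsum : ∑ j, (eval x (F j))^2 = 0 := by linarith
    have := (Finset.sum_eq_zero_iff_of_nonneg (fun j _ => sq_nonneg (eval x (F j)))).mp hsum
      j (Finset.mem_univ j)
    have := pow_eq_zero_iff (n := 2) (by norm_num) |>.mp this
    simpa [evalMap] using this
  · intro h
    have : ∀ j, eval x (F j) = 0 := fun j => congrFun h j
    simp [this]

lemma grad_zero_iff_evalMap_zero (F : Fin n → MvPolynomial (Fin n) ℝ)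
    (hdet : ∀ x : Fin n → ℝ, jacDet F x ≠ 0) (x : Fin n → ℝ) :
    (∀ i, eval x (pderiv i (polyH F)) = 0) ↔ evalMap F x = 0 := by
  constructor
  · intro hg
    set M : Matrix (Fin n) (Fin n) ℝ := Matrix.of fun i j => eval x (pderiv j (F i)) with hM
    have hMdet : IsUnit M.det := isUnit_iff_ne_zero.mpr (hdet x)
    have hv : Matrix.vecMul (evalMap F x) M = 0 := by
      funext j
      have := hg j
      rw [eval_pderiv_polyH] at this
      simpa [Matrix.vecMul, dotProduct, evalMap, hM] using this
    have : evalMap F x = Matrix.vecMul (Matrix.vecMul (evalMap F x) M) M⁻¹ := by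
      rw [Matrix.vecMul_vecMul, Matrix.mul_nonsing_inv _ hMdet, Matrix.vecMul_one]
    rw [this, hv, Matrix.zero_vecMul]
  · intro h i
    rw [eval_pderiv_polyH]
    apply Finset.sum_eq_zero
    intro j _
    have : eval x (F j) = 0 := congrFun h j
    rw [this, zero_mul]

lemma euclidNorm_nonneg (x : Fin n → ℝ) : 0 ≤ euclidNorm x := Real.sqrt_nonneg _

lemma abs_coord_le_euclidNorm (x : Fin n → ℝ) (i : Fin n) : |x i| ≤ euclidNorm x := by
  unfold euclidNorm
  rw [← Real.sqrt_sq_eq_abs]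
  apply Real.sqrt_le_sqrt
  exact Finset.single_le_sum (fun j _ => sq_nonneg (x j)) (Finset.mem_univ i)

lemma sublevel_compact (F : Fin n → MvPolynomial (Fin n) ℝ)
    (hinf : Tendsto (fun x : Fin n → ℝ => euclidNorm (evalMap F x))
      (comap euclidNorm atTop) atTop) (β : ℝ) :
    IsCompact {x : Fin n → ℝ | eval x (polyH F) ≤ β} := by
  set b : ℝ := Real.sqrt (2 * max β 0) + 1 with hb
  have hs : {x : Fin n → ℝ | b ≤ euclidNorm (evalMap F x)} ∈ comap euclidNorm atTop :=
    hinf (mem_atTop b)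
  obtain ⟨t, ht, hsub⟩ := Filter.mem_comap.mp hs
  obtain ⟨M, hMt⟩ := mem_atTop_sets.mp ht
  have key : ∀ x : Fin n → ℝ, eval x (polyH F) ≤ β → euclidNorm x < M := by
    intro x hx
    by_contra hcon
    push_neg at hcon
    have h1 : b ≤ euclidNorm (evalMap F x) := hsub (hMt _ hcon)
    have h2 : euclidNorm (evalMap F x) ≤ Real.sqrt (2 * max β 0) := by
      unfold euclidNorm
      apply Real.sqrt_le_sqrt
      have : ∑ i, (evalMap F x i)^2 = 2 * eval x (polyH F) := by
        rw [eval_polyH_eq]; unfold evalMap; ring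
      rw [this]
      have := le_max_left β 0
      nlinarith [polyH_nonneg F x]
    rw [hb] at h1
    linarith
  apply IsCompact.of_isClosed_subset (isCompact_closedBall (0 : Fin n → ℝ) (max M 0))
  · exact isClosed_le (MvPolynomial.continuous_eval _) continuous_const
  · intro x hx
    simp only [Metric.mem_closedBall, dist_zero_right]
    rw [pi_norm_le_iff_of_nonneg (le_max_right M 0)]
    intro i
    have h1 := abs_coord_le_euclidNorm x i
    have h2 := key x hx
    have h3 : euclidNorm x ≤ max M 0 := le_trans (le_of_lt h2) (le_max_left M 0)
    calc ‖x i‖ = |x i| := rfl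
      _ ≤ euclidNorm x := h1
      _ ≤ max M 0 := h3

lemma isolated_zero (F : Fin n → MvPolynomial (Fin n) ℝ)
    (hdet : ∀ x : Fin n → ℝ, jacDet F x ≠ 0) (z : Fin n → ℝ) :
    ∃ U : Set (Fin n → ℝ), IsOpen U ∧ z ∈ U ∧
      ∀ y ∈ U, evalMap F y = evalMap F z → y = z := by
  set L : (Fin n → ℝ) →L[ℝ] (Fin n → ℝ) := ContinuousLinearMap.pi (fun j => Dclm (F j) z) with hL
  have hF : HasFDerivAt (evalMap F) L z := by
    apply hasFDerivAt_pi.2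
    intro j
    exact hasFDerivAt_eval (F j) z
  -- L is injective
  set M : Matrix (Fin n) (Fin n) ℝ := Matrix.of fun i j => eval z (pderiv j (F i)) with hM
  have hMdet : IsUnit M.det := isUnit_iff_ne_zero.mpr (hdet z)
  have hinj : Function.Injective L := by
    intro u v huv
    have h1 : M.mulVec u = M.mulVec v := by
      funext j
      have := congrFun huv j
      simp only [hL, ContinuousLinearMap.pi_apply] at this
      rw [Dclm_apply, Dclm_apply] at this
      simpa [Matrix.mulVec, dotProduct, hM] using this
    have := congrArg (fun w => M⁻¹.mulVec w) h1
    simpa [Matrix.mulVec_mulVec, Matrix.nonsing_inv_mul _ hMdet] using this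
  have hsurj : Function.Surjective (L : (Fin n → ℝ) →ₗ[ℝ] (Fin n → ℝ)) :=
    LinearMap.injective_iff_surjective.mp hinj
  let e : (Fin n → ℝ) ≃L[ℝ] (Fin n → ℝ) :=
    (LinearEquiv.ofBijective (L : (Fin n → ℝ) →ₗ[ℝ] (Fin n → ℝ))
      ⟨hinj, hsurj⟩).toContinuousLinearEquiv
  obtain ⟨K, hK⟩ : ∃ K : NNReal, AntilipschitzWith K e := ⟨_, e.antilipschitz⟩
  set c : ℝ := ((2 : ℝ) * (K + 1))⁻¹ with hc
  have hcpos : 0 < c := by positivity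
  have hev : ∀ᶠ y in 𝓝 z, ‖evalMap F y - evalMap F z - L (y - z)‖ ≤ c * ‖y - z‖ :=
    hF.isLittleO.bound hcpos
  obtain ⟨U, hUsub, hUopen, hzU⟩ := _root_.eventually_nhds_iff.mp hev
  refine ⟨U, hUopen, hzU, fun y hy hFy => ?_⟩
  have h1 : ‖L (y - z)‖ ≤ c * ‖y - z‖ := by
    have := hUsub y hy
    rwa [hFy, sub_self, zero_sub, norm_neg] at this
  have h2 : ‖y - z‖ ≤ (K : ℝ) * ‖L (y - z)‖ := by
    have := hK.le_mul_dist (y - z) 0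
    rw [dist_eq_norm, dist_eq_norm, map_zero, sub_zero, sub_zero] at this
    exact this
  have h3 : ‖y - z‖ ≤ (K : ℝ) * (c * ‖y - z‖) :=
    le_trans h2 (by
      apply mul_le_mul_of_nonneg_left h1 K.coe_nonneg)
  have hKc : (K : ℝ) * c < 1 := by
    rw [hc]
    rw [mul_inv_lt_iff₀ (by positivity)]
    nlinarith [K.coe_nonneg]
  have : ‖y - z‖ ≤ 0 := by nlinarith [norm_nonneg (y - z)]
  have : y - z = 0 := norm_le_zero_iff.mp this
  exact sub_eq_zero.mp this

lemma zeros_finite (F : Fin n → MvPolynomial (Fin n) ℝ)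
    (hdet : ∀ x : Fin n → ℝ, jacDet F x ≠ 0)
    (hinf : Tendsto (fun x : Fin n → ℝ => euclidNorm (evalMap F x))
      (comap euclidNorm atTop) atTop) : {x : Fin n → ℝ | evalMap F x = 0}.Finite := by
  set Z := {x : Fin n → ℝ | evalMap F x = 0} with hZ
  have hZclosed : IsClosed Z := by
    have : Continuous (evalMap F) := continuous_pi fun i => MvPolynomial.continuous_eval _
    exact isClosed_eq this continuous_const
  have hZsub : Z ⊆ {x : Fin n → ℝ | eval x (polyH F) ≤ 0} := by
    intro x hx
    simp only [Set.mem_setOf_eq]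
    rw [(polyH_eq_zero_iff F x).mpr hx]
  have hZcpt : IsCompact Z := (sublevel_compact F hinf 0).of_isClosed_subset hZclosed hZsub
  choose U hUopen hmemU hUinj using fun z : Fin n → ℝ => isolated_zero F hdet z
  have hcover : Z ⊆ ⋃ z ∈ Z, U z := fun x hx =>
    Set.mem_biUnion hx (hmemU x)
  obtain ⟨t, htsub, htfin, hcov⟩ := hZcpt.elim_finite_subcover_image
    (fun z _ => hUopen z) hcover
  apply Set.Finite.subset htfin
  intro x hx
  obtain ⟨z, hzt, hxz⟩ := Set.mem_iUnion₂.mp (hcov hx)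
  have hz : z ∈ Z := htsub hzt
  have : x = z := hUinj z x hxz (by rw [hx, hz])
  rwa [this]

lemma taylor_bound (p : MvPolynomial (Fin n) ℝ) (x v : Fin n → ℝ) (τ : ℝ) (hτ : 0 < τ)
    (B : ℝ)
    (hB : ∀ t ∈ Set.Icc (0:ℝ) τ,
      |∑ i, (∑ j, eval (x + t • v) (pderiv j (pderiv i p)) * v j) * v i| ≤ B) :
    eval (x + τ • v) p ≤ eval x p + τ * (∑ i, eval x (pderiv i p) * v i) + τ^2 * B := by
  set g : ℝ → ℝ := fun s => eval (x + s • v) p with hg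
  set G : ℝ → ℝ := fun s => ∑ i, eval (x + s • v) (pderiv i p) * v i with hG
  set G' : ℝ → ℝ := fun s => ∑ i, (∑ j, eval (x + s • v) (pderiv j (pderiv i p)) * v j) * v i
    with hG'
  have hgd : ∀ t, HasDerivAt g (G t) t := fun t => hasDerivAt_eval_line p x v t
  have hGd : ∀ t, HasDerivAt G (G' t) t := by
    intro t
    apply HasDerivAt.fun_sum
    intro i _
    exact (hasDerivAt_eval_line (pderiv i p) x v t).mul_const (v i)
  obtain ⟨η, hη, hηeq⟩ := exists_hasDerivAt_eq_slope g G hτ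
    (fun t _ => (hgd t).continuousAt.continuousWithinAt)
    (fun t _ => hgd t)
  obtain ⟨ξ, hξ, hξeq⟩ := exists_hasDerivAt_eq_slope G G' hη.1
    (fun t _ => (hGd t).continuousAt.continuousWithinAt)
    (fun t _ => hGd t)
  have hgτ : g τ = g 0 + τ * G η := by
    rw [sub_zero] at hηeq
    field_simp at hηeq
    linarith
  have hGη : G η = G 0 + η * G' ξ := by
    rw [sub_zero] at hξeq
    have hηne : η ≠ 0 := ne_of_gt hη.1
    field_simp at hξeq
    linarith
  have hξmem : ξ ∈ Set.Icc (0:ℝ) τ :=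
    ⟨hξ.1.le, le_trans hξ.2.le hη.2.le⟩
  have hbound := hB ξ hξmem
  have hg0 : g 0 = eval x p := by simp [hg]
  have hG0 : G 0 = ∑ i, eval x (pderiv i p) * v i := by simp [hG]
  have hB0 : 0 ≤ B := le_trans (abs_nonneg _) hbound
  have h1 : η * G' ξ ≤ τ * B := by
    have h2 : G' ξ ≤ B := le_trans (le_abs_self _) hbound
    have h3 : -B ≤ G' ξ := by
      have := neg_abs_le (G' ξ); linarith [abs_le.mp (le_refl |G' ξ|)] 
    nlinarith [hη.1.le, hη.2.le]
  calc eval (x + τ • v) p = g τ := rfl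
    _ = g 0 + τ * (G 0 + η * G' ξ) := by rw [hgτ, hGη]
    _ ≤ g 0 + τ * (G 0 + τ * B) := by nlinarith
    _ = eval x p + τ * (∑ i, eval x (pderiv i p) * v i) + τ^2 * B := by
        rw [hg0, hG0]; ring

lemma grad_zero_of_evalMap_zero (F : Fin n → MvPolynomial (Fin n) ℝ) (x : Fin n → ℝ)
    (h : evalMap F x = 0) (i : Fin n) : eval x (pderiv i (polyH F)) = 0 := by
  rw [eval_pderiv_polyH]
  apply Finset.sum_eq_zero
  intro j _
  have : eval x (F j) = 0 := congrFun h j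
  rw [this, zero_mul]

theorem zero_unique (F : Fin n → MvPolynomial (Fin n) ℝ)
    (h0 : evalMap F 0 = 0)
    (hdet : ∀ x : Fin n → ℝ, jacDet F x ≠ 0)
    (hinf : Tendsto (fun x : Fin n → ℝ => euclidNorm (evalMap F x))
      (comap euclidNorm atTop) atTop)
    (a : Fin n → ℝ) (ha : evalMap F a = 0) : a = 0 := by
  by_contra hne
  haveI : Nontrivial (Fin n → ℝ) := ⟨a, 0, hne⟩
  set H : (Fin n → ℝ) → ℝ := fun x => eval x (polyH F) with hH
  have hHcont : Continuous H := MvPolynomial.continuous_eval _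
  set Z : Set (Fin n → ℝ) := {x | evalMap F x = 0} with hZ
  have hZfin : Z.Finite := zeros_finite F hdet hinf
  have hnorm : (0:ℝ) < ‖a‖ := norm_pos_iff.mpr hne
  have hne' : ((Set.Ioo (0:ℝ) ‖a‖) \ ((fun z => ‖z‖) '' Z)).Nonempty :=
    ((Set.Ioo_infinite hnorm).diff (hZfin.image _)).nonempty
  obtain ⟨r, ⟨hr0, hra⟩, hrZ⟩ := hne'
  -- minimum of H on the sphere of radius r
  have hsph : (sphere (0 : Fin n → ℝ) r).Nonempty := NormedSpace.sphere_nonempty.mpr hr0.le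
  obtain ⟨y₀, hy₀, hy₀min⟩ := (isCompact_sphere (0 : Fin n → ℝ) r).exists_isMinOn hsph
    hHcont.continuousOn
  set m : ℝ := H y₀ with hm
  have hm0 : 0 < m := by
    rcases (polyH_nonneg F y₀).lt_or_eq with h | h
    · exact h
    · exfalso
      have hy₀Z : y₀ ∈ Z := (polyH_eq_zero_iff F y₀).mp h.symm
      exact hrZ ⟨y₀, hy₀Z, (mem_sphere_zero_iff_norm.mp hy₀)⟩
  -- the set of path bounds
  set S : Set ℝ := {b | ∃ γ : ℝ → (Fin n → ℝ), Continuous γ ∧ γ 0 = 0 ∧ γ 1 = a ∧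
    ∀ t ∈ Set.Icc (0:ℝ) 1, H (γ t) ≤ b} with hS
  have hSne : S.Nonempty := by
    set γ : ℝ → (Fin n → ℝ) := fun t => t • a with hγ
    have hγcont : Continuous γ := continuous_id.smul continuous_const
    obtain ⟨b, hb⟩ := isCompact_Icc.exists_bound_of_continuousOn
      ((hHcont.comp hγcont).continuousOn (s := Set.Icc (0:ℝ) 1))
    exact ⟨b, γ, hγcont, by simp [hγ], by simp [hγ], fun t ht =>
      le_trans (le_abs_self _) (hb t ht)⟩
  have hSlb : ∀ b ∈ S, m ≤ b := by
    rintro b ⟨γ, hγc, hγ0, hγ1, hγb⟩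
    have hcont : ContinuousOn (fun t => ‖γ t‖) (Set.Icc (0:ℝ) 1) :=
      (hγc.norm).continuousOn
    have hmem : r ∈ Set.Icc ‖γ (0:ℝ)‖ ‖γ (1:ℝ)‖ := by
      rw [hγ0, hγ1]; simpa using ⟨hr0.le, hra.le⟩
    obtain ⟨t, ht, hrt⟩ := intermediate_value_Icc zero_le_one hcont hmem
    have hsp : γ t ∈ sphere (0 : Fin n → ℝ) r := mem_sphere_zero_iff_norm.mpr hrt
    exact le_trans (hy₀min hsp) (hγb t ht)
  have hSbdd : BddBelow S := ⟨m, hSlb⟩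
  set c : ℝ := sInf S with hc
  have hcm : m ≤ c := le_csInf hSne hSlb
  have hc0 : 0 < c := lt_of_lt_of_le hm0 hcm
  set β : ℝ := c + 1 with hβ
  set K : Set (Fin n → ℝ) := {x | eval x (polyH F) ≤ β} with hK
  have hKcpt : IsCompact K := sublevel_compact F hinf β
  -- gradient
  set g : (Fin n → ℝ) → (Fin n → ℝ) := fun x i => eval x (pderiv i (polyH F)) with hg
  have hgcont : Continuous g := continuous_pi fun i => MvPolynomial.continuous_eval _
  set G2 : (Fin n → ℝ) → ℝ := fun x => ∑ i, (g x i)^2 with hG2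
  have hG2nonneg : ∀ x, 0 ≤ G2 x := fun x => Finset.sum_nonneg fun i _ => sq_nonneg _
  -- bound on gradient over K
  obtain ⟨M1, hM1⟩ := hKcpt.exists_bound_of_continuousOn hgcont.continuousOn
  set M' : ℝ := max M1 1 with hM'
  have hM'1 : (1:ℝ) ≤ M' := le_max_right _ _
  have hM'pos : (0:ℝ) < M' := lt_of_lt_of_le one_pos hM'1
  have hgbd : ∀ x ∈ K, ∀ i, |g x i| ≤ M' := by
    intro x hx i
    calc |g x i| = ‖g x i‖ := rfl
      _ ≤ ‖g x‖ := norm_le_pi_norm (g x) i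
      _ ≤ M1 := hM1 x hx
      _ ≤ M' := le_max_left _ _
  -- K is bounded
  obtain ⟨R, hR⟩ := hKcpt.isBounded.subset_closedBall (0 : Fin n → ℝ)
  -- second derivative bound
  set Q : (Fin n → ℝ) → ℝ := fun y => ∑ i, ∑ j, |eval y (pderiv j (pderiv i (polyH F)))|
    with hQ
  have hQcont : Continuous Q := by
    apply continuous_finset_sum
    intro i _
    apply continuous_finset_sum
    intro j _
    exact (MvPolynomial.continuous_eval _).abs
  obtain ⟨C1, hC1⟩ := (isCompact_closedBall (0 : Fin n → ℝ) (R + M' + 1)).exists_bound_of_continuousOn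
    hQcont.continuousOn
  set C0 : ℝ := max (C1 * M'^2) 1 with hC0
  have hC0pos : (0:ℝ) < C0 := lt_of_lt_of_le one_pos (le_max_right _ _)
  -- Taylor estimate
  have hTaylor : ∀ x ∈ K, ∀ τ : ℝ, 0 < τ → τ ≤ 1 →
      H (x - τ • g x) ≤ H x - τ * G2 x + τ^2 * C0 := by
    intro x hx τ hτ0 hτ1
    have hxball : x ∈ closedBall (0 : Fin n → ℝ) R := hR hx
    have hxnorm : ‖x‖ ≤ R := by simpa [dist_zero_right] using hxball
    set v : Fin n → ℝ := -(g x) with hv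
    have hvnorm : ‖v‖ ≤ M' := by
      rw [hv, norm_neg]
      rw [pi_norm_le_iff_of_nonneg hM'pos.le]
      intro i
      exact hgbd x hx i
    have hB : ∀ t ∈ Set.Icc (0:ℝ) τ,
        |∑ i, (∑ j, eval (x + t • v) (pderiv j (pderiv i (polyH F))) * v j) * v i| ≤ C0 := by
      intro t ht
      have htv : ‖x + t • v‖ ≤ R + M' + 1 := by
        calc ‖x + t • v‖ ≤ ‖x‖ + ‖t • v‖ := norm_add_le _ _
          _ ≤ R + ‖t • v‖ := by linarith
          _ ≤ R + M' + 1 := by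
              rw [norm_smul, Real.norm_eq_abs]
              have h1 : |t| ≤ 1 := by
                rw [abs_of_nonneg ht.1]; exact le_trans ht.2 hτ1
              nlinarith [hvnorm, norm_nonneg v, abs_nonneg t]
      have hmem : x + t • v ∈ closedBall (0 : Fin n → ℝ) (R + M' + 1) := by
        simpa [dist_zero_right] using htv
      have hQbd : Q (x + t • v) ≤ C1 := le_trans (le_abs_self _) (hC1 _ hmem)
      have hvco : ∀ i, |v i| ≤ M' := by
        intro i
        calc |v i| = ‖v i‖ := rfl
          _ ≤ ‖v‖ := norm_le_pi_norm v i
          _ ≤ M' := hvnorm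
      calc |∑ i, (∑ j, eval (x + t • v) (pderiv j (pderiv i (polyH F))) * v j) * v i|
          ≤ ∑ i, |(∑ j, eval (x + t • v) (pderiv j (pderiv i (polyH F))) * v j) * v i| :=
            Finset.abs_sum_le_sum_abs _ _
        _ ≤ ∑ i, (∑ j, |eval (x + t • v) (pderiv j (pderiv i (polyH F)))| * M') * M' := by
            apply Finset.sum_le_sum
            intro i _
            rw [abs_mul]
            apply mul_le_mul _ (hvco i) (abs_nonneg _) _
            · calc |∑ j, eval (x + t • v) (pderiv j (pderiv i (polyH F))) * v j|
                  ≤ ∑ j, |eval (x + t • v) (pderiv j (pderiv i (polyH F))) * v j| :=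
                    Finset.abs_sum_le_sum_abs _ _
                _ ≤ ∑ j, |eval (x + t • v) (pderiv j (pderiv i (polyH F)))| * M' := by
                    apply Finset.sum_le_sum
                    intro j _
                    rw [abs_mul]
                    exact mul_le_mul_of_nonneg_left (hvco j) (abs_nonneg _)
            · apply Finset.sum_nonneg
              intro j _
              positivity
        _ = (∑ i, ∑ j, |eval (x + t • v) (pderiv j (pderiv i (polyH F)))|) * M'^2 := by
            rw [Finset.sum_mul]
            apply Finset.sum_congr rfl
            intro i _
            rw [← Finset.sum_mul]
            ring
        _ ≤ C1 * M'^2 := by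
            apply mul_le_mul_of_nonneg_right _ (by positivity)
            exact hQbd
        _ ≤ C0 := le_max_left _ _
    have := taylor_bound (polyH F) x v τ hτ0 C0 hB
    have hfirst : ∑ i, eval x (pderiv i (polyH F)) * v i = -G2 x := by
      rw [hG2, ← Finset.sum_neg_distrib]
      apply Finset.sum_congr rfl
      intro i _
      rw [hv]
      simp [hg, pow_two]
    rw [hfirst] at this
    have hxv : x + τ • v = x - τ • g x := by
      rw [hv]; module
    rw [hxv] at this
    calc H (x - τ • g x) ≤ eval x (polyH F) + τ * (-G2 x) + τ^2 * C0 := this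
      _ = H x - τ * G2 x + τ^2 * C0 := by rw [hH]; ring
  -- uniform gradient lower bound on the strip
  obtain ⟨δ, hδpos, hδ⟩ : ∃ δ : ℝ, 0 < δ ∧ ∀ x, c/2 ≤ H x → H x ≤ β → δ ≤ G2 x := by
    set K' : Set (Fin n → ℝ) := {x | c/2 ≤ H x ∧ H x ≤ β} with hK'
    by_cases hK'ne : K'.Nonempty
    · have hK'cpt : IsCompact K' := by
        apply hKcpt.of_isClosed_subset
        · exact IsClosed.inter (isClosed_le continuous_const hHcont) (isClosed_le hHcont continuous_const)
        · intro x hx; exact hx.2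
      obtain ⟨x₀, hx₀, hx₀min⟩ := hK'cpt.exists_isMinOn hK'ne
        (by fun_prop : Continuous G2).continuousOn
      refine ⟨G2 x₀, ?_, fun x h1 h2 => hx₀min ⟨h1, h2⟩⟩
      rcases (hG2nonneg x₀).lt_or_eq with h | h
      · exact h
      · exfalso
        have hgz : ∀ i, g x₀ i = 0 := by
          intro i
          have := (Finset.sum_eq_zero_iff_of_nonneg (fun i _ => sq_nonneg (g x₀ i))).mp h.symm
            i (Finset.mem_univ i)
          exact pow_eq_zero_iff (n := 2) (by norm_num) |>.mp this
        have : evalMap F x₀ = 0 := (grad_zero_iff_evalMap_zero F hdet x₀).mp hgz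
        have : H x₀ = 0 := (polyH_eq_zero_iff F x₀).mpr this
        have hcH : c/2 ≤ H x₀ := hx₀.1
        rw [this] at hcH
        linarith
    · exact ⟨1, one_pos, fun x h1 h2 => (hK'ne ⟨x, ⟨h1, h2⟩⟩).elim⟩
  -- choose τ and e
  set τ : ℝ := min 1 (min (δ/(2*C0)) (c/(4*C0))) with hτ
  have hτpos : 0 < τ := by
    apply lt_min one_pos
    apply lt_min <;> positivity
  have hτ1 : τ ≤ 1 := min_le_left _ _
  have hτδ : C0 * τ ≤ δ/2 := by
    have : τ ≤ δ/(2*C0) := le_trans (min_le_right _ _) (min_le_left _ _)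
    rw [le_div_iff₀ (by positivity)] at this
    linarith
  have hτc : C0 * τ ≤ c/4 := by
    have : τ ≤ c/(4*C0) := le_trans (min_le_right _ _) (min_le_right _ _)
    rw [le_div_iff₀ (by positivity)] at this
    linarith
  have hτsq : τ^2 * C0 ≤ τ * (δ/2) := by
    have h1 : τ * (C0 * τ) ≤ τ * (δ/2) := mul_le_mul_of_nonneg_left hτδ hτpos.le
    calc τ^2 * C0 = τ * (C0 * τ) := by ring
      _ ≤ τ * (δ/2) := h1
  have hτsqc : τ^2 * C0 ≤ c/4 := by
    have h1 : τ * (C0 * τ) ≤ 1 * (c/4) := by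
      apply mul_le_mul hτ1 hτc (by positivity) (by norm_num)
    calc τ^2 * C0 = τ * (C0 * τ) := by ring
      _ ≤ 1 * (c/4) := h1
      _ = c/4 := by ring
  set e : ℝ := min (min (τ*δ/4) (c/4)) (1/2) with he
  have hepos : 0 < e := by
    apply lt_min (lt_min (by positivity) (by positivity)) (by norm_num)
  have heτδ : e ≤ τ*δ/4 := le_trans (min_le_left _ _) (min_le_left _ _)
  have hec : e ≤ c/4 := le_trans (min_le_left _ _) (min_le_right _ _)
  have he1 : e ≤ 1/2 := min_le_right _ _
  -- pick a good path
  obtain ⟨b, hbS, hbc⟩ : ∃ b ∈ S, b < c + e := by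
    have : sInf S < c + e := by rw [← hc]; linarith
    exact (csInf_lt_iff hSbdd hSne).mp this
  obtain ⟨γ, hγc, hγ0, hγ1, hγb⟩ := hbS
  -- deformed path
  set γ' : ℝ → (Fin n → ℝ) := fun t => γ t - τ • g (γ t) with hγ'
  have hγ'c : Continuous γ' := hγc.sub (((hgcont.comp hγc).const_smul τ))
  have hg0 : g 0 = 0 := by
    funext i
    exact grad_zero_of_evalMap_zero F 0 h0 i
  have hga : g a = 0 := by
    funext i
    exact grad_zero_of_evalMap_zero F a ha i
  have hγ'0 : γ' 0 = 0 := by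
    show γ 0 - τ • g (γ 0) = 0
    rw [hγ0, hg0]; simp
  have hγ'1 : γ' 1 = a := by
    show γ 1 - τ • g (γ 1) = a
    rw [hγ1, hga]; simp
  have hkey : ∀ t ∈ Set.Icc (0:ℝ) 1, H (γ' t) ≤ c - e := by
    intro t ht
    set x : Fin n → ℝ := γ t with hx
    have hHx : H x ≤ b := hγb t ht
    have hHxβ : H x ≤ β := by
      rw [hβ]; linarith
    have hxK : x ∈ K := hHxβ
    have hest := hTaylor x hxK τ hτpos hτ1
    by_cases hcase : c/2 ≤ H x
    · have hδx : δ ≤ G2 x := hδ x hcase hHxβ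
      have : H (x - τ • g x) ≤ H x - τ * δ + τ * (δ/2) := by
        have h1 : τ * δ ≤ τ * G2 x := mul_le_mul_of_nonneg_left hδx hτpos.le
        linarith [hest, hτsq]
      calc H (γ' t) = H (x - τ • g x) := rfl
        _ ≤ H x - τ * δ + τ * (δ/2) := this
        _ ≤ b - τ*δ/2 := by linarith
        _ ≤ c + e - τ*δ/2 := by linarith
        _ ≤ c + τ*δ/4 - τ*δ/2 := by linarith
        _ = c - τ*δ/4 := by ring
        _ ≤ c - e := by linarith
    · push_neg at hcase
      have : H (x - τ • g x) ≤ H x + τ^2 * C0 := by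
        have h1 : 0 ≤ τ * G2 x := mul_nonneg hτpos.le (hG2nonneg x)
        linarith [hest]
      calc H (γ' t) = H (x - τ • g x) := rfl
        _ ≤ H x + τ^2 * C0 := this
        _ ≤ c/2 + c/4 := by linarith [hτsqc]
        _ = c - c/4 := by ring
        _ ≤ c - e := by linarith
  have hmemS : (c - e) ∈ S := ⟨γ', hγ'c, hγ'0, hγ'1, hkey⟩
  have : c ≤ c - e := csInf_le hSbdd hmemS
  linarith


end Stmt8Aux

/-- if `‖F x‖₂ → +∞` as `‖x‖₂ → +∞`, then the origin is the unique
point where the gradient `∇H` of `H = ‖F‖₂²/2` vanishes, i.e. the unique singular point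
of the gradient vector field `Y = -∇H`. -/
theorem stmt8 {n : ℕ} (F : Fin n → MvPolynomial (Fin n) ℝ)
    (h0 : ∀ i, eval (0 : Fin n → ℝ) (F i) = 0)
    (hdet : ∀ x : Fin n → ℝ, jacDet F x ≠ 0)
    (hinf : Tendsto (fun x : Fin n → ℝ => euclidNorm (evalMap F x))
      (comap euclidNorm atTop) atTop) :
    ∀ x : Fin n → ℝ, (∀ i, eval x (pderiv i (polyH F)) = 0) ↔ x = 0 := by
  have h0' : evalMap F 0 = 0 := funext h0
  intro x
  constructor
  · intro hg
    have hFx : evalMap F x = 0 := (Stmt8Aux.grad_zero_iff_evalMap_zero F hdet x).mp hg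
    exact Stmt8Aux.zero_unique F h0' hdet hinf x hFx
  · intro hx
    subst hx
    intro i
    exact Stmt8Aux.grad_zero_of_evalMap_zero F 0 h0' i
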